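/- arXiv:2103.04606 — 5 statements merged into one kernel-verified Lean document; each statement's English description precedes it below -/
import Mathlib

section
/- Let X be a type, let θ, ε, ℓ : X → X and f : X → X → X satisfy the semi-ladder equations. Fix init ∈ X and a bit sequence b : ℕ → Bool, and define sequences x, y : ℕ → X by x₀ = init, y₀ = ℓ(init), and for each i ≥ 0: if b(i) is true then x_{i+1} = f(x_i, y_i) and y_{i+1} = ε(y_i); otherwise y_{i+1} = f(y_i, x_i) and x_{i+1} = ε(x_i). Then for every i ≥ 0 one has y_i = ℓ(x_i), and moreover x_{i+1} = θ(x_i) if b(i) is true and x_{i+1} = ε(x_i) otherwise. -/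
/-- semi-interleaved ladder correctness.
Given the semi-ladder equations (E1)-(E3) and sequences `x`, `y` following the
semi-interleaved ladder iteration, we have `y i = ℓ (x i)` for all `i`, and
`x (i+1) = θ (x i)` when `b i` is true, `x (i+1) = ε (x i)` otherwise. -/
theorem semi_interleaved_ladder_correct {X : Type*}
    (θ ε ℓ : X → X) (f : X → X → X)
    (hE1 : ∀ x, ε (ℓ x) = ℓ (θ x))
    (hE2 : ∀ x, f x (ℓ x) = θ x)
    (hE3 : ∀ x, f (ℓ x) x = ℓ (ε x))
    (init : X) (b : ℕ → Bool) (x y : ℕ → X)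
    (hx0 : x 0 = init) (hy0 : y 0 = ℓ init)
    (hstepT : ∀ i, b i = true → x (i + 1) = f (x i) (y i) ∧ y (i + 1) = ε (y i))
    (hstepF : ∀ i, b i = false → y (i + 1) = f (y i) (x i) ∧ x (i + 1) = ε (x i)) :
    ∀ i, y i = ℓ (x i) ∧
      (b i = true → x (i + 1) = θ (x i)) ∧
      (b i = false → x (i + 1) = ε (x i)) := by
  have key : ∀ i, y i = ℓ (x i) := by
    intro i
    induction i with
    | zero => rw [hx0, hy0]
    | succ n ih =>
      cases hb : b n with
      | true =>
        obtain ⟨h1, h2⟩ := hstepT n hb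
        rw [h2, h1, ih, hE2, hE1]
      | false =>
        obtain ⟨h1, h2⟩ := hstepF n hb
        rw [h2, h1, ih, hE3]
  intro i
  refine ⟨key i, fun hb => ?_, fun hb => (hstepF i hb).2⟩
  rw [(hstepT i hb).1, key i, hE2]
end

section
/- Let X be a type, let θ, ε, ℓ : X → X and f, g : X → X → X satisfy the fully-ladder equations. Fix init ∈ X and a bit sequence b : ℕ → Bool, and define sequences x, y : ℕ → X by x₀ = init, y₀ = ℓ(init), and for each i ≥ 0: if b(i) is true then x_{i+1} = f(x_i, y_i) and y_{i+1} = g(x_{i+1}, y_i); otherwise y_{i+1} = f(y_i, x_i) and x_{i+1} = g(y_{i+1}, x_i). Then for every i ≥ 0 one has y_i = ℓ(x_i), and moreover x_{i+1} = θ(x_i) if b(i) is true and x_{i+1} = ε(x_i) otherwise. -/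
/-- fully-interleaved ladder correctness.
Given the fully-ladder equations (F1)-(F4) and sequences `x`, `y` following the
fully-interleaved ladder iteration, we have `y i = ℓ (x i)` for all `i`, and
`x (i+1) = θ (x i)` when `b i` is true, `x (i+1) = ε (x i)` otherwise. -/
theorem fully_interleaved_ladder_correct {X : Type*}
    (θ ε ℓ : X → X) (f g : X → X → X)
    (hF1 : ∀ x, g (θ x) (ℓ x) = ℓ (θ x))
    (hF2 : ∀ x, f x (ℓ x) = θ x)
    (hF3 : ∀ x, f (ℓ x) x = ℓ (ε x))
    (hF4 : ∀ x, g (f (ℓ x) x) x = ε x)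
    (init : X) (b : ℕ → Bool) (x y : ℕ → X)
    (hx0 : x 0 = init) (hy0 : y 0 = ℓ init)
    (hstepT : ∀ i, b i = true →
      x (i + 1) = f (x i) (y i) ∧ y (i + 1) = g (x (i + 1)) (y i))
    (hstepF : ∀ i, b i = false →
      y (i + 1) = f (y i) (x i) ∧ x (i + 1) = g (y (i + 1)) (x i)) :
    ∀ i, y i = ℓ (x i) ∧
      (b i = true → x (i + 1) = θ (x i)) ∧
      (b i = false → x (i + 1) = ε (x i)) := by
  have key : ∀ i, y i = ℓ (x i) := by
    intro i
    induction i with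
    | zero => rw [hx0, hy0]
    | succ i ih =>
      cases hb : b i with
      | true =>
        obtain ⟨h1, h2⟩ := hstepT i hb
        rw [h2, h1, ih, hF2, hF1, ← hF2, ← ih, ← h1]
      | false =>
        obtain ⟨h1, h2⟩ := hstepF i hb
        rw [h2, h1, ih, hF4, hF3, ← hF3, ← ih, ← h1]
  intro i
  refine ⟨key i, ?_, ?_⟩
  · intro hb
    rw [(hstepT i hb).1, key i, hF2]
  · intro hb
    rw [(hstepF i hb).2, (hstepF i hb).1, key i, hF4]
end

section
/- Let n ≥ 1, a ∈ ZMod n, and let b_d, b_{d−1}, …, b_0 be bits with k = Σ_{0 ≤ i ≤ d} b_i·2^i, and let m_d, …, m_0 ∈ ZMod n be arbitrary masks (one per iteration). Define x, y ∈ ZMod n by x = 1, y = a, and for i = d down to 0: if b_i = 1 then simultaneously x ← m_i·a·(x² + y²) + (1 − m_i·(a² + 1))·x·y and y ← y²; otherwise y ← m_i·a·(y² + x²) + (1 − m_i·(a² + 1))·y·x and x ← x². Then after processing all bits, x = a^k in ZMod n (and y = a·x throughout). -/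
/-- State of the masked semi-interleaved ladder for modular exponentiation after
`j` iterations: starting from `(x, y) = (1, a)`, iteration `j` (which processes
bit `d - j`, i.e. bits are processed from `i = d` down to `0`) simultaneously
updates, when the bit is `1`,
`x ← mᵢ·a·(x² + y²) + (1 − mᵢ·(a² + 1))·x·y` and `y ← y²`,
and otherwise `y ← mᵢ·a·(y² + x²) + (1 − mᵢ·(a² + 1))·y·x` and `x ← x²`. -/
def maskedExpLadder {n : ℕ} (a : ZMod n) (b : ℕ → Bool) (m : ℕ → ZMod n) (d : ℕ) :
    ℕ → ZMod n × ZMod n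
  | 0 => (1, a)
  | j + 1 =>
    let s := maskedExpLadder a b m d j
    let x := s.1
    let y := s.2
    let i := d - j
    if b i then
      (m i * a * (x ^ 2 + y ^ 2) + (1 - m i * (a ^ 2 + 1)) * (x * y), y ^ 2)
    else
      (x ^ 2, m i * a * (y ^ 2 + x ^ 2) + (1 - m i * (a ^ 2 + 1)) * (y * x))

/-- Exponent accumulated after `j` iterations. -/
def maskedExpAux (b : ℕ → Bool) (d : ℕ) : ℕ → ℕ
  | 0 => 0
  | j + 1 => 2 * maskedExpAux b d j + (if b (d - j) then 1 else 0)

lemma maskedExpLadder_inv {n : ℕ} (a : ZMod n) (b : ℕ → Bool) (m : ℕ → ZMod n)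
    (d : ℕ) : ∀ j, (maskedExpLadder a b m d j).2 = a * (maskedExpLadder a b m d j).1 ∧
      (maskedExpLadder a b m d j).1 = a ^ (maskedExpAux b d j) := by
  intro j
  induction j with
  | zero => simp [maskedExpLadder, maskedExpAux]
  | succ j ih =>
    obtain ⟨hy, hx⟩ := ih
    have hstep : maskedExpLadder a b m d (j + 1)
        = (a ^ (2 * maskedExpAux b d j + (if b (d - j) then 1 else 0)),
           a * a ^ (2 * maskedExpAux b d j + (if b (d - j) then 1 else 0))) := by
      by_cases hb : b (d - j) <;>
        simp only [maskedExpLadder, hb, Bool.false_eq_true, if_true, if_false, hy, hx] <;>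
        rw [Prod.mk.injEq] <;> exact ⟨by ring, by ring⟩
    rw [hstep]
    exact ⟨rfl, by simp [maskedExpAux]⟩

lemma maskedExpAux_sum (b : ℕ → Bool) (d : ℕ) :
    ∀ j ≤ d + 1, 2 ^ (d + 1 - j) * maskedExpAux b d j
      = ∑ i ∈ Finset.Ico (d + 1 - j) (d + 1), (if b i then 2 ^ i else 0) := by
  intro j
  induction j with
  | zero => simp [maskedExpAux]
  | succ j ih =>
    intro hj
    have hj' : j ≤ d := Nat.lt_succ_iff.mp hj
    have ihj := ih (le_trans hj' (Nat.le_succ d))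
    have h1 : d + 1 - (j + 1) = d - j := by omega
    have h2 : d + 1 - j = (d - j) + 1 := by omega
    have h3 : d - j < d + 1 := by omega
    rw [h1, Finset.sum_eq_sum_Ico_succ_bot h3, ← h2, ← ihj]
    simp only [maskedExpAux]
    by_cases hb : b (d - j) <;> simp [hb, h2, pow_succ] <;> ring

/-- after processing the bits `b d, …, b 0` of `k`, the masked
semi-interleaved ladder computes `x = a ^ k` in `ZMod n`, with arbitrary masks
`m i` (one per iteration), and `y = a * x` throughout. -/
theorem maskedExpLadder_correct {n : ℕ} (hn : 1 ≤ n) (a : ZMod n) (d : ℕ)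
    (b : ℕ → Bool) (m : ℕ → ZMod n) (k : ℕ)
    (hk : k = ∑ i ∈ Finset.range (d + 1), (if b i then 2 ^ i else 0)) :
    (maskedExpLadder a b m d (d + 1)).1 = a ^ k ∧
      ∀ j ≤ d + 1,
        (maskedExpLadder a b m d j).2 = a * (maskedExpLadder a b m d j).1 := by
  have hsum := maskedExpAux_sum b d (d + 1) le_rfl
  simp only [Nat.sub_self, pow_zero, one_mul] at hsum
  have hkk : k = maskedExpAux b d (d + 1) := by
    rw [hk, hsum, Finset.range_eq_Ico]
  constructor
  · rw [(maskedExpLadder_inv a b m d (d + 1)).2, hkk]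
  · intro j _
    exact (maskedExpLadder_inv a b m d j).1
end

section
/- Let n ≥ 1 and a, ℓ₁ ∈ ZMod n, and assume ℓ₁, ℓ₁² − 1, and ℓ₁³ − a are all units of ZMod n. Define θ(x) = a·x², ε(x) = x², ℓ(x) = ℓ₁·x, f(x, y) = (ℓ₁² − 1)⁻¹·((ℓ₁³ − a)·ℓ₁⁻¹·x·y − (ℓ₁ − a)·y²), and g(x, y) = (ℓ₁³ − a)⁻¹·(a·(ℓ₁² − 1)·y² + ℓ₁·(ℓ₁ − a)·x). Then θ, ε, ℓ, f, g satisfy the fully-ladder equations: for all x ∈ ZMod n, g(θ(x), ℓ(x)) = ℓ(θ(x)), f(x, ℓ(x)) = θ(x), f(ℓ(x), x) = ℓ(ε(x)), and g(f(ℓ(x), x), x) = ε(x). -/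
/-- the fully-interleaved ladder functions for the modular
exponentiation satisfy the fully-ladder equations in `ZMod n`, provided the
ladder constant `ℓ₁` is such that `ℓ₁`, `ℓ₁² − 1` and `ℓ₁³ − a` are units. -/
theorem exp_fully_ladder_equations {n : ℕ} (hn : 1 ≤ n) (a ℓ₁ : ZMod n)
    (h1 : IsUnit ℓ₁) (h2 : IsUnit (ℓ₁ ^ 2 - 1)) (h3 : IsUnit (ℓ₁ ^ 3 - a))
    (θ ε ℓ : ZMod n → ZMod n) (f g : ZMod n → ZMod n → ZMod n)
    (hθ : ∀ x, θ x = a * x ^ 2)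
    (hε : ∀ x, ε x = x ^ 2)
    (hℓ : ∀ x, ℓ x = ℓ₁ * x)
    (hf : ∀ x y, f x y =
      Ring.inverse (ℓ₁ ^ 2 - 1) *
        ((ℓ₁ ^ 3 - a) * Ring.inverse ℓ₁ * (x * y) - (ℓ₁ - a) * y ^ 2))
    (hg : ∀ x y, g x y =
      Ring.inverse (ℓ₁ ^ 3 - a) *
        (a * (ℓ₁ ^ 2 - 1) * y ^ 2 + ℓ₁ * (ℓ₁ - a) * x)) :
    (∀ x, g (θ x) (ℓ x) = ℓ (θ x)) ∧
    (∀ x, f x (ℓ x) = θ x) ∧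
    (∀ x, f (ℓ x) x = ℓ (ε x)) ∧
    (∀ x, g (f (ℓ x) x) x = ε x) := by
  have c1 : Ring.inverse ℓ₁ * ℓ₁ = 1 := Ring.inverse_mul_cancel _ h1
  have c2 : Ring.inverse (ℓ₁ ^ 2 - 1) * (ℓ₁ ^ 2 - 1) = 1 :=
    Ring.inverse_mul_cancel _ h2
  have c3 : Ring.inverse (ℓ₁ ^ 3 - a) * (ℓ₁ ^ 3 - a) = 1 :=
    Ring.inverse_mul_cancel _ h3
  have e3 : ∀ x, f (ℓ x) x = ℓ (ε x) := by
    intro x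
    rw [hf, hℓ, hℓ, hε]
    linear_combination Ring.inverse (ℓ₁ ^ 2 - 1) * x ^ 2 * (ℓ₁ ^ 3 - a) * c1
      + ℓ₁ * x ^ 2 * c2
  refine ⟨fun x => ?_, fun x => ?_, e3, fun x => ?_⟩
  · rw [hg, hθ, hℓ, hℓ]
    linear_combination a * x ^ 2 * ℓ₁ * c3
  · rw [hf, hℓ, hθ]
    linear_combination Ring.inverse (ℓ₁ ^ 2 - 1) * x ^ 2 * (ℓ₁ ^ 3 - a) * c1
      + a * x ^ 2 * c2
  · rw [e3, hg, hℓ, hε]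
    linear_combination x ^ 2 * c3
end

section
/- Let R be a commutative ring, M an R-module, A ∈ M, and c ∈ R such that c and 3 − 2c are units of R; write u = (3 − 2c)⁻¹. Define θ(P) = 2P + A, ε(P) = 2P, ℓ(P) = P + u·A, f(P, Q) = c·(P − Q − u·A) + 2Q + u·A, and g(P, Q) = P + c⁻¹·(−P + 2Q + u·A) − u·A. Then θ, ε, ℓ, f, g satisfy the fully-ladder equations: for all P ∈ M, g(θ(P), ℓ(P)) = ℓ(θ(P)), f(P, ℓ(P)) = θ(P), f(ℓ(P), P) = ℓ(ε(P)), and g(f(ℓ(P), P), P) = ε(P). -/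
/-- the fully-interleaved ladder functions for the double-and-add
scalar multiplication (with fixed point `A` and coefficient `c` such that `c`
and `3 − 2c` are units, `u = (3 − 2c)⁻¹`) satisfy the fully-ladder equations,
over any module `M` over a commutative ring `R`. Here `2P` is written `P + P`. -/
theorem scalar_mult_fully_ladder_equations {R M : Type*} [CommRing R]
    [AddCommGroup M] [Module R M] (A : M) (c : R)
    (hc : IsUnit c) (h3 : IsUnit (3 - 2 * c))
    (u : R) (hu : u = Ring.inverse (3 - 2 * c))
    (θ ε ℓ : M → M) (f g : M → M → M)
    (hθ : ∀ P, θ P = P + P + A)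
    (hε : ∀ P, ε P = P + P)
    (hℓ : ∀ P, ℓ P = P + u • A)
    (hf : ∀ P Q, f P Q = c • (P - Q - u • A) + (Q + Q) + u • A)
    (hg : ∀ P Q, g P Q = P + Ring.inverse c • (-P + (Q + Q) + u • A) - u • A) :
    (∀ P, g (θ P) (ℓ P) = ℓ (θ P)) ∧
    (∀ P, f P (ℓ P) = θ P) ∧
    (∀ P, f (ℓ P) P = ℓ (ε P)) ∧
    (∀ P, g (f (ℓ P) P) P = ε P) := by
  have h1 : Ring.inverse c * c = 1 := Ring.inverse_mul_cancel c hc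
  have h2 : u * (3 - 2 * c) = 1 := by rw [hu]; exact Ring.inverse_mul_cancel _ h3
  refine ⟨fun P => ?_, fun P => ?_, fun P => ?_, fun P => ?_⟩ <;>
    simp only [hθ, hε, hℓ, hf, hg] <;> match_scalars <;>
    first
    | ring1
    | linear_combination 2 * u * h1 + Ring.inverse c * h2
    | linear_combination -(2 * u) * h1 - Ring.inverse c * h2
    | linear_combination h2
end
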